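/- Let X be a finite metric space with an even number n ≥ 2 of points satisfying t_b(X) < t_d(X), and let k = n/2 − 1. Then for every r with t_b(X) ≤ r < t_d(X), the Vietoris–Rips complex VR_r(X) (simplices are subsets of diameter ≤ r) is isomorphic as a simplicial complex to the (k+1)-dimensional cross-polytope, i.e., the simplicial complex on vertices {±e_1, …, ±e_{k+1}} whose faces are the subsets not containing any antipodal pair {e_i, −e_i}. -/
import Mathlib


/-- The largest distance from `x` to any point of `X`. -/
noncomputable def ptTd (X : Type*) [MetricSpace X] (x : X) : ℝ :=
  sSup (Set.range fun y => dist x y)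

/-- The second largest distance (counted with multiplicity over points) from `x`
to points of `X`. -/
noncomputable def ptTb (X : Type*) [MetricSpace X] (x : X) : ℝ :=
  sSup {r : ℝ | ∃ y z : X, y ≠ z ∧ r = min (dist x y) (dist x z)}

/-- `t_b(X) = max_{x ∈ X} t_b(x)`. -/
noncomputable def tbX (X : Type*) [MetricSpace X] : ℝ :=
  sSup (Set.range (ptTb X))

/-- `t_d(X) = min_{x ∈ X} t_d(x)`. -/
noncomputable def tdX (X : Type*) [MetricSpace X] : ℝ :=
  sInf (Set.range (ptTd X))

lemma exists_pairing_equiv {X : Type*} [Fintype X] (k : ℕ)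
    (f : X → X) (hinv : Function.Involutive f) (hne : ∀ x, f x ≠ x)
    (hcard : Fintype.card X = 2 * (k + 1)) :
    ∃ e : X ≃ Fin (k + 1) × Bool, ∀ x y, (e x).1 = (e y).1 ↔ (y = x ∨ y = f x) := by
  classical
  let s : Setoid X := ⟨fun x y => y = x ∨ y = f x, by
    constructor
    · intro x; exact Or.inl rfl
    · intro x y hxy
      rcases hxy with rfl | rfl
      · exact Or.inl rfl
      · exact Or.inr (hinv x).symm
    · intro x y z hxy hyz
      rcases hxy with rfl | rfl
      · exact hyz
      · rcases hyz with rfl | rfl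
        · exact Or.inr rfl
        · exact Or.inl (hinv x)⟩
  haveI : Fintype (Quotient s) := Fintype.ofFinite _
  have hfib : ∀ q : Quotient s, Nonempty ({x : X // Quotient.mk s x = q} ≃ Bool) := by
    intro q
    obtain ⟨x₀, hx₀⟩ := Quotient.exists_rep q
    have hmem : ∀ y : X, Quotient.mk s y = q ↔ (y = x₀ ∨ y = f x₀) := by
      intro y
      rw [← hx₀, Quotient.eq]
      exact ⟨fun h => Setoid.symm h, fun h => Setoid.symm h⟩
    have e2 : {x : X // Quotient.mk s x = q} ≃ ({x₀, f x₀} : Finset X) :=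
      Equiv.subtypeEquiv (Equiv.refl X) (by
        intro y
        simp only [Equiv.refl_apply, Finset.mem_insert, Finset.mem_singleton]
        exact hmem y)
    have hscard : Fintype.card {x : X // Quotient.mk s x = q} = 2 := by
      rw [Fintype.card_congr e2, Fintype.card_coe]
      rw [Finset.card_insert_of_notMem (by simp [Ne.symm (hne x₀)])]
      simp
    exact ⟨Fintype.equivOfCardEq (by simp [hscard])⟩
  have g : ∀ q : Quotient s, {x : X // Quotient.mk s x = q} ≃ Bool :=
    fun q => (hfib q).some
  let e₀ : X ≃ Quotient s × Bool :=
    (Equiv.sigmaFiberEquiv (Quotient.mk s)).symm.trans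
      ((Equiv.sigmaCongrRight g).trans (Equiv.sigmaEquivProd (Quotient s) Bool))
  have hQ : Fintype.card (Quotient s) = k + 1 := by
    have hc := Fintype.card_congr e₀
    rw [Fintype.card_prod, Fintype.card_bool, hcard] at hc
    omega
  let eQ : Quotient s ≃ Fin (k + 1) := Fintype.equivFinOfCardEq hQ
  refine ⟨e₀.trans (Equiv.prodCongr eQ (Equiv.refl Bool)), fun x y => ?_⟩
  have hfst : ∀ z : X, ((e₀.trans (Equiv.prodCongr eQ (Equiv.refl Bool))) z).1
      = eQ (Quotient.mk s z) := fun z => rfl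
  rw [hfst, hfst]
  rw [eQ.injective.eq_iff, Quotient.eq]
  exact Iff.rfl

/-- If `X` is a finite metric space with an even number `n = 2(k+1) ≥ 2` of points and
`t_b(X) < t_d(X)`, then for every `r ∈ [t_b(X), t_d(X))` the Vietoris–Rips complex
`VR_r(X)` is isomorphic, as a simplicial complex, to the `(k+1)`-dimensional
cross-polytope: there is a bijection of vertex sets under which a subset is a simplex
(has diameter `≤ r`) iff it contains no antipodal pair. -/
theorem vietorisRips_iso_crossPolytope {X : Type*} [MetricSpace X] [Fintype X]
    (k : ℕ) (hcard : Fintype.card X = 2 * (k + 1))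
    (h : tbX X < tdX X) (r : ℝ) (hr₁ : tbX X ≤ r) (hr₂ : r < tdX X) :
    ∃ e : X ≃ Fin (k + 1) × Bool,
      ∀ σ : Finset X,
        (∀ x ∈ σ, ∀ y ∈ σ, dist x y ≤ r) ↔
          ∀ i : Fin (k + 1), ¬ ((i, true) ∈ σ.image e ∧ (i, false) ∈ σ.image e) := by
  classical
  have hpos : 0 < Fintype.card X := by omega
  haveI : Nonempty X := Fintype.card_pos_iff.mp hpos
  have htd : ∀ x : X, ∃ y : X, r < dist x y := by
    intro x
    have h1 : tdX X ≤ ptTd X x :=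
      csInf_le (Set.finite_range _).bddBelow (Set.mem_range_self x)
    have h2 : ptTd X x ∈ Set.range fun y => dist x y :=
      (Set.range_nonempty _).csSup_mem (Set.finite_range _)
    obtain ⟨y, hy⟩ := h2
    have hy' : dist x y = ptTd X x := hy
    exact ⟨y, by rw [hy']; exact lt_of_lt_of_le hr₂ h1⟩
  have htb : ∀ x y z : X, y ≠ z → min (dist x y) (dist x z) ≤ r := by
    intro x y z hyz
    have hfin : {t : ℝ | ∃ y z : X, y ≠ z ∧ t = min (dist x y) (dist x z)}.Finite := by
      apply (Set.finite_range (fun p : X × X => min (dist x p.1) (dist x p.2))).subset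
      rintro t ⟨a, b, -, rfl⟩
      exact ⟨(a, b), rfl⟩
    have h1 : min (dist x y) (dist x z) ≤ ptTb X x :=
      le_csSup hfin.bddAbove ⟨y, z, hyz, rfl⟩
    have h2 : ptTb X x ≤ tbX X :=
      le_csSup (Set.finite_range _).bddAbove (Set.mem_range_self x)
    linarith
  have hr0 : 0 ≤ r := by
    obtain ⟨a, b, hab⟩ := Fintype.exists_pair_of_one_lt_card (by omega : 1 < Fintype.card X)
    exact le_trans (le_min dist_nonneg dist_nonneg) (htb a a b hab)
  have huniq : ∀ x y z : X, r < dist x y → r < dist x z → y = z := by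
    intro x y z hy hz
    by_contra hne
    have h1 := htb x y z hne
    have h2 : r < min (dist x y) (dist x z) := lt_min hy hz
    linarith
  choose f hf using htd
  have hfu : ∀ x y, r < dist x y → y = f x := fun x y hy => huniq x y (f x) hy (hf x)
  have hne : ∀ x, f x ≠ x := by
    intro x hx
    have h1 := hf x
    rw [hx, dist_self] at h1
    linarith
  have hinv : Function.Involutive f := by
    intro x
    have h1 : r < dist (f x) x := by rw [dist_comm]; exact hf x
    exact (hfu (f x) x h1).symm
  obtain ⟨e, he⟩ := exists_pairing_equiv k f hinv hne hcard
  refine ⟨e, fun σ => ?_⟩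
  constructor
  · intro hdiam i hi
    obtain ⟨h1, h2⟩ := hi
    simp only [Finset.mem_image] at h1 h2
    obtain ⟨x, hx, hex⟩ := h1
    obtain ⟨y, hy, hey⟩ := h2
    have hxy : x ≠ y := by rintro rfl; rw [hex] at hey; simp at hey
    have h11 : (e x).1 = (e y).1 := by rw [hex, hey]
    rcases (he x y).1 h11 with hcase | hcase
    · exact hxy hcase.symm
    · have h3 := hf x
      have hd := hdiam x hx y hy
      rw [hcase] at hd
      linarith
  · intro hno x hx y hy
    by_contra hlt
    push_neg at hlt
    have hxy : x ≠ y := by rintro rfl; rw [dist_self] at hlt; linarith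
    have hyfx : y = f x := hfu x y hlt
    subst hyfx
    have h1 : (e x).1 = (e (f x)).1 := (he x (f x)).2 (Or.inr rfl)
    have h2 : e x ≠ e (f x) := fun hh => hxy (e.injective hh)
    have hne2 : (e x).2 ≠ (e (f x)).2 := fun hb => h2 (Prod.ext_iff.2 ⟨h1, hb⟩)
    have hb2 : (e (f x)).2 = !(e x).2 := by
      revert hne2
      cases (e x).2 <;> cases (e (f x)).2 <;> simp
    have hmx : e x ∈ σ.image e := Finset.mem_image_of_mem e hx
    have hmfx : e (f x) ∈ σ.image e := Finset.mem_image_of_mem e hy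
    have key1 : ((e x).1, (e x).2) ∈ σ.image e := by simpa using hmx
    have key2 : ((e x).1, !(e x).2) ∈ σ.image e := by
      have heq : e (f x) = ((e x).1, !(e x).2) := by
        rw [h1, ← hb2]
      rw [← heq]
      exact hmfx
    apply hno (e x).1
    refine ⟨?_, ?_⟩ <;> cases hbx : (e x).2
    · simpa [hbx] using key2
    · simpa [hbx] using key1
    · simpa [hbx] using key1
    · simpa [hbx] using key2
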